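/- Let T be a finite tree with at least 2 vertices. Then the minimum k such that T contains a k-Unbounded Hamiltonian Cycle equals the number of vertices of T of degree at least 2 (the non-leaf vertices). In particular, there exists a walk visiting every vertex of T with adjacent start and end vertices in which the unbounded vertices are exactly the non-leaf vertices, and in every walk visiting every vertex of T with adjacent start and end vertices, every non-leaf vertex occurs at least twice. -/

import Mathlib

set_option linter.unusedSectionVars false
set_option linter.unusedVariables false
set_option maxHeartbeats 1000000

open SimpleGraph

universe u

section Aux
variable {V : Type u} [Fintype V] [DecidableEq V] {G : SimpleGraph V}


lemma deg_pos [DecidableRel G.Adj] (hc : G.Connected) (hn : 2 ≤ Fintype.card V) (v : V) :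
    1 ≤ G.degree v := by
  obtain ⟨w, hw⟩ := Fintype.exists_ne_of_one_lt_card hn v
  obtain ⟨p⟩ := hc.preconnected v w
  obtain ⟨s, hs, -⟩ := p.exists_eq_cons_of_ne (Ne.symm hw)
  exact G.degree_pos_iff_exists_adj v |>.mpr ⟨s, hs⟩

lemma exists_leaf [DecidableRel G.Adj] (hT : G.IsTree) (hn : 2 ≤ Fintype.card V) :
    ∃ ℓ p0 : V, G.Adj ℓ p0 ∧ G.degree ℓ = 1 := by
  by_contra h
  push_neg at h
  have hdeg2 : ∀ v, 2 ≤ G.degree v := by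
    intro v
    have h1 := deg_pos hT.isConnected hn v
    by_contra h2
    push_neg at h2
    have hd : G.degree v = 1 := by omega
    obtain ⟨w, hw⟩ := (G.degree_pos_iff_exists_adj v).mp (by omega)
    exact h v w hw hd
  have hsum : ∑ v, G.degree v = 2 * G.edgeFinset.card := G.sum_degrees_eq_twice_card_edges
  have hcard : G.edgeFinset.card + 1 = Fintype.card V := hT.card_edgeFinset
  have : 2 * Fintype.card V ≤ ∑ v, G.degree v := by
    calc 2 * Fintype.card V = ∑ _v : V, 2 := by simp [mul_comm]
    _ ≤ ∑ v, G.degree v := Finset.sum_le_sum fun v _ => hdeg2 v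
  omega

lemma mem_support_of_between (hT : G.IsTree) {x u v : V} (hxu : G.Adj x u) (hxv : G.Adj x v)
    (huv : u ≠ v) (R : G.Walk u v) : x ∈ R.support := by
  have hp2 : (Walk.cons hxu.symm (Walk.cons hxv Walk.nil) : G.Walk u v).IsPath := by
    simp [Walk.isPath_def, hxu.ne', hxv.ne, huv]
  have := (hT.existsUnique_path u v).unique R.bypass_isPath hp2
  have hx : x ∈ R.bypass.support := by rw [this]; simp
  exact R.support_bypass_subset hx


lemma prefix_avoid {a x : V} (P : G.Walk a x) (h1 : P.support.count x = 1) {y : V}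
    (hy : y ∈ P.support) (hyx : y ≠ x) : ∃ R : G.Walk a y, x ∉ R.support := by
  refine ⟨P.takeUntil y hy, ?_⟩
  have hspec := P.take_spec hy
  have hsupp : P.support = (P.takeUntil y hy).support ++ (P.dropUntil y hy).support.tail := by
    conv_lhs => rw [← hspec]
    exact Walk.support_append _ _
  have hxd : x ∈ (P.dropUntil y hy).support.tail := by
    have hxs : x ∈ (P.dropUntil y hy).support := Walk.end_mem_support _
    have := (P.dropUntil y hy).support_eq_cons
    rw [this] at hxs
    rcases List.mem_cons.mp hxs with h | h
    · exact absurd h.symm hyx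
    · rw [this]; exact h
  have : (P.takeUntil y hy).support.count x = 0 := by
    have : 0 < (P.dropUntil y hy).support.tail.count x := List.count_pos_iff.mpr hxd
    rw [hsupp, List.count_append] at h1
    omega
  exact List.count_eq_zero.mp this

lemma avoid_endpoint {a b x : V} (W : G.Walk a b) (hc : W.support.count x = 1) {y : V}
    (hy : y ∈ W.support) (hyx : y ≠ x) :
    (∃ R : G.Walk a y, x ∉ R.support) ∨ (∃ R : G.Walk b y, x ∉ R.support) := by
  have hx : x ∈ W.support := List.count_pos_iff.mp (by omega)
  have hspec := W.take_spec hx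
  have hsupp : W.support = (W.takeUntil x hx).support ++ (W.dropUntil x hx).support.tail := by
    conv_lhs => rw [← hspec]
    exact Walk.support_append _ _
  have hPc : (W.takeUntil x hx).support.count x = 1 := W.count_support_takeUntil_eq_one hx
  have hQt : (W.dropUntil x hx).support.tail.count x = 0 := by
    rw [hsupp, List.count_append] at hc; omega
  rw [hsupp] at hy
  rcases List.mem_append.mp hy with h | h
  · exact Or.inl (prefix_avoid _ hPc h hyx)
  · right
    have hQc : (W.dropUntil x hx).reverse.support.count x = 1 := by
      rw [Walk.support_reverse, List.count_reverse]
      rw [(W.dropUntil x hx).support_eq_cons, List.count_cons]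
      simp [hQt]
    have hyq : y ∈ (W.dropUntil x hx).reverse.support := by
      rw [Walk.support_reverse, List.mem_reverse, (W.dropUntil x hx).support_eq_cons]
      exact List.mem_cons_of_mem _ h
    exact prefix_avoid _ hQc hyq hyx
lemma lower_bound [DecidableRel G.Adj] (hT : G.IsTree) {a b : V} (hab : G.Adj a b)
    (W : G.Walk a b) (hall : ∀ x : V, x ∈ W.support) {x : V} (hx : 2 ≤ G.degree x) :
    1 < W.support.count x := by
  by_contra hle
  push_neg at hle
  have hc : W.support.count x = 1 := by
    have : 0 < W.support.count x := List.count_pos_iff.mpr (hall x)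
    omega
  have hx2 : 1 < (G.neighborFinset x).card := by rwa [G.card_neighborFinset_eq_degree]
  obtain ⟨u, hu, v, hv, huv⟩ := Finset.one_lt_card.mp hx2
  rw [mem_neighborFinset] at hu hv
  have key : ∀ {c : V} (R1 : G.Walk c u) (R2 : G.Walk c v),
      x ∉ R1.support → x ∉ R2.support → False := by
    intro c R1 R2 h1 h2
    have hm := mem_support_of_between hT hu hv huv (R1.reverse.append R2)
    rw [Walk.mem_support_append_iff] at hm
    rcases hm with hm | hm
    · exact h1 (by rwa [Walk.support_reverse, List.mem_reverse] at hm)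
    · exact h2 hm
  have Hu := avoid_endpoint W hc (hall u) hu.ne'
  have Hv := avoid_endpoint W hc (hall v) hv.ne'
  rcases Hu with ⟨R1, h1⟩ | ⟨R1, h1⟩ <;> rcases Hv with ⟨R2, h2⟩ | ⟨R2, h2⟩
  · exact key R1 R2 h1 h2
  · refine key R1 (Walk.cons hab R2) h1 ?_
    simp only [Walk.support_cons, List.mem_cons, not_or]
    exact ⟨fun he => h1 (he ▸ R1.start_mem_support), h2⟩
  · refine key R1 (Walk.cons hab.symm R2) h1 ?_
    simp only [Walk.support_cons, List.mem_cons, not_or]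
    exact ⟨fun he => h1 (he ▸ R1.start_mem_support), h2⟩
  · exact key R1 R2 h1 h2

end Aux

section Aux2
variable {V : Type u} [DecidableEq V] {G : SimpleGraph V}


/-- The hom from the comap graph on a subtype into `G`. -/
@[reducible]
def subHom (p : V → Prop) : G.comap (Subtype.val : {x : V // p x} → V) →g G where
  toFun := Subtype.val
  map_rel' := fun h => h

lemma subHom_injective (p : V → Prop) : Function.Injective (subHom (G := G) p) :=
  Subtype.val_injective

/-- Lift reachability along a walk avoiding `ℓ`. -/
lemma reach_lift {ℓ : V} : ∀ {u v : V} (w : G.Walk u v) (_ : ℓ ∉ w.support)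
    (hu : u ≠ ℓ) (hv : v ≠ ℓ),
    (G.comap (Subtype.val : {x : V // x ≠ ℓ} → V)).Reachable ⟨u, hu⟩ ⟨v, hv⟩ := by
  intro u v w
  induction w with
  | nil => intro _ hu hv; rfl
  | cons h q ih =>
    intro hw hu hv
    rename_i u' b v'
    have hb : b ≠ ℓ := by
      intro hbe
      exact hw (by rw [Walk.support_cons]; exact List.mem_cons_of_mem _ (hbe ▸ q.start_mem_support))
    have hq : ℓ ∉ q.support := fun hm => hw (by rw [Walk.support_cons]; exact List.mem_cons_of_mem _ hm)
    exact (Adj.reachable (by exact h : (G.comap (Subtype.val : {x : V // x ≠ ℓ} → V)).Adj ⟨u', hu⟩ ⟨b, hb⟩)).trans (ih hq hb hv)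

/-- A path between two vertices different from a degree-one vertex `ℓ` avoids `ℓ`. -/
lemma path_avoids_leaf (hT : G.IsAcyclic) {ℓ p0 : V} (hadj : G.Adj ℓ p0)
    (huniq : ∀ w, G.Adj ℓ w → w = p0) {u v : V} (P : G.Walk u v) (hP : P.IsPath)
    (hu : u ≠ ℓ) (hv : v ≠ ℓ) : ℓ ∉ P.support := by
  intro hmem
  have hspec := P.take_spec hmem
  set P1 := P.takeUntil ℓ hmem with hP1
  set P2 := P.dropUntil ℓ hmem with hP2
  -- P1 : Walk u ℓ, P2 : Walk ℓ v
  obtain ⟨s1, hs1, q1, hq1⟩ := P1.reverse.exists_eq_cons_of_ne (Ne.symm hu)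
  obtain ⟨s2, hs2, q2, hq2⟩ := P2.exists_eq_cons_of_ne (Ne.symm hv)
  have hs1p : s1 = p0 := huniq _ hs1
  have hs2p : s2 = p0 := huniq _ hs2
  have hnodup : (P1.support ++ P2.support.tail).Nodup := by
    rw [← Walk.support_append, hspec]
    exact hP.support_nodup
  have hmem1 : p0 ∈ P1.support := by
    have : s1 ∈ P1.reverse.support := by
      rw [hq1, Walk.support_cons]
      exact List.mem_cons_of_mem _ q1.start_mem_support
    rw [Walk.support_reverse, List.mem_reverse] at this
    rwa [hs1p] at this
  have hmem2 : p0 ∈ P2.support.tail := by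
    have : P2.support.tail = q2.support := by rw [hq2, Walk.support_cons, List.tail_cons]
    rw [this, ← hs2p]
    exact q2.start_mem_support
  exact (List.disjoint_of_nodup_append hnodup) hmem1 hmem2

lemma comap_isTree [Fintype V] (hT : G.IsTree) {ℓ p0 : V} (hadj : G.Adj ℓ p0)
    (huniq : ∀ w, G.Adj ℓ w → w = p0) (hn : 2 ≤ Fintype.card V) :
    (G.comap (Subtype.val : {x : V // x ≠ ℓ} → V)).IsTree := by
  constructor
  · haveI : Nonempty {x : V // x ≠ ℓ} := ⟨⟨p0, hadj.ne'⟩⟩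
    refine Connected.mk ?_
    intro x y
    obtain ⟨P, hP, -⟩ := hT.existsUnique_path x.val y.val
    have := path_avoids_leaf hT.IsAcyclic hadj huniq P hP x.prop y.prop
    have h := reach_lift P this x.prop y.prop
    convert h <;> simp
  · rw [isAcyclic_iff_path_unique]
    intro x y p q
    have hp := Walk.map_isPath_of_injective (subHom_injective (· ≠ ℓ)) p.prop
    have hq := Walk.map_isPath_of_injective (subHom_injective (· ≠ ℓ)) q.prop
    have := (hT.existsUnique_path x.val y.val).unique hp hq
    have := (Walk.map_injective_of_injective (subHom_injective (· ≠ ℓ)) x y) this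
    exact Subtype.ext this


lemma subHom_val (p : V → Prop) (x : {x : V // p x}) : subHom (G := G) p x = x.val := rfl

lemma degree_comap [Fintype V] [DecidableRel G.Adj] {ℓ : V}
    [DecidableRel (G.comap (Subtype.val : {x : V // x ≠ ℓ} → V)).Adj]
    (v : {x : V // x ≠ ℓ}) :
    G.degree v.val
      = (G.comap (Subtype.val : {x : V // x ≠ ℓ} → V)).degree v
        + (if G.Adj v.val ℓ then 1 else 0) := by
  have himg : (((G.comap (Subtype.val : {x : V // x ≠ ℓ} → V)).neighborFinset v)).image Subtype.val = (G.neighborFinset v.val).erase ℓ := by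
    ext w
    simp only [Finset.mem_image, mem_neighborFinset, Finset.mem_erase, comap_adj]
    constructor
    · rintro ⟨u, hadj, rfl⟩
      exact ⟨u.prop, hadj⟩
    · rintro ⟨hne, hadj⟩
      exact ⟨⟨w, hne⟩, hadj, rfl⟩
  have h1 : (G.comap (Subtype.val : {x : V // x ≠ ℓ} → V)).degree v = ((G.neighborFinset v.val).erase ℓ).card := by
    rw [← himg, Finset.card_image_of_injective _ Subtype.val_injective,
      card_neighborFinset_eq_degree]
  by_cases hadj : G.Adj v.val ℓ
  · have hmem : ℓ ∈ G.neighborFinset v.val := (mem_neighborFinset _ _ _).mpr hadj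
    have h2 := Finset.card_erase_of_mem hmem
    have h3 : 1 ≤ (G.neighborFinset v.val).card := Finset.card_pos.mpr ⟨ℓ, hmem⟩
    rw [card_neighborFinset_eq_degree] at h2 h3
    simp only [hadj, if_true]
    omega
  · have hmem : ℓ ∉ G.neighborFinset v.val := fun h => hadj ((mem_neighborFinset _ _ _).mp h)
    rw [Finset.erase_eq_of_notMem hmem, card_neighborFinset_eq_degree] at h1
    simp [hadj, h1]
end Aux2

lemma count_subtype_beq {V : Type u} [DecidableEq V] {p : V → Prop} (a : {x // p x})
    (l : List {x // p x}) : List.count a l = @List.count _ instBEqOfDecidableEq a l := by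
  induction l <;> simp [List.count_cons, Subtype.ext_iff, *]

theorem euler_tour : ∀ (n : ℕ) {V : Type u} [Fintype V] [DecidableEq V]
    (G : SimpleGraph V) [DecidableRel G.Adj], Fintype.card V ≤ n → G.IsTree → ∀ r : V,
    ∃ W : G.Walk r r, ∀ v : V, W.support.count v = G.degree v + (if v = r then 1 else 0) := by
  intro n
  induction n with
  | zero =>
    intro V _ _ G _ hcard hT r
    haveI := hT.isConnected.nonempty
    have := Fintype.card_pos (α := V)
    omega
  | succ n ih =>
    intro V _ _ G _ hcard hT r
    by_cases h1 : Fintype.card V ≤ 1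
    · refine ⟨Walk.nil, ?_⟩
      intro v
      have hvr : v = r := by
        have := Fintype.card_le_one_iff.mp h1
        exact this v r
      have hdeg : G.degree v = 0 := by
        by_contra h
        obtain ⟨w, hw⟩ := (G.degree_pos_iff_exists_adj v).mp (by omega)
        have hwv : w = v := by
          have := Fintype.card_le_one_iff.mp h1
          exact this w v
        exact G.irrefl (hwv ▸ hw)
      subst hvr
      simp [hdeg]
    · push_neg at h1
      have h1 : 2 ≤ Fintype.card V := h1
      obtain ⟨ℓ, p0, hadj, hdeg⟩ := exists_leaf hT h1
      have huniq : ∀ w, G.Adj ℓ w → w = p0 := by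
        intro w hw
        have hcn : (G.neighborFinset ℓ).card = 1 := by
          rw [card_neighborFinset_eq_degree]; exact hdeg
        obtain ⟨a, ha⟩ := Finset.card_eq_one.mp hcn
        have hp : p0 ∈ G.neighborFinset ℓ := (mem_neighborFinset _ _ _).mpr hadj
        have hwm : w ∈ G.neighborFinset ℓ := (mem_neighborFinset _ _ _).mpr hw
        rw [ha] at hp hwm
        rw [Finset.mem_singleton] at hp hwm
        rw [hwm, hp]
      haveI hGdec : DecidableRel (G.comap (Subtype.val : {x : V // x ≠ ℓ} → V)).Adj :=
        fun x y => ‹DecidableRel G.Adj› x.val y.val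
      have hT' := comap_isTree hT hadj huniq h1
      have hcV' : Fintype.card {x : V // x ≠ ℓ} = Fintype.card V - 1 := by
        rw [Fintype.card_subtype_compl]
        simp
      have hcard' : Fintype.card {x : V // x ≠ ℓ} ≤ n := by omega
      have hp0ne : p0 ≠ ℓ := hadj.ne'
      -- count transfer
      have hMc : ∀ {c d : {x : V // x ≠ ℓ}} (W' : (G.comap (Subtype.val : {x : V // x ≠ ℓ} → V)).Walk c d)
          (v : {x : V // x ≠ ℓ}),
          (W'.map (subHom _)).support.count v.val = W'.support.count v := by
        intro c d W' v
        rw [Walk.support_map]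
        have : (v : V) = subHom (G := G) (· ≠ ℓ) v := (subHom_val (G := G) (· ≠ ℓ) v).symm
        rw [this]
        have hinj := subHom_injective (G := G) (· ≠ ℓ)
        exact List.count_map_of_injective _ _ hinj v
      have hMl : ∀ {c d : {x : V // x ≠ ℓ}} (W' : (G.comap (Subtype.val : {x : V // x ≠ ℓ} → V)).Walk c d),
          (W'.map (subHom _)).support.count ℓ = 0 := by
        intro c d W'
        rw [List.count_eq_zero, Walk.support_map]
        intro hm
        obtain ⟨u, -, he⟩ := List.mem_map.mp hm
        rw [subHom_val] at he
        exact u.prop he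
      have hdegv : ∀ (v : {x : V // x ≠ ℓ}),
          G.degree v.val = (G.comap (Subtype.val : {x : V // x ≠ ℓ} → V)).degree v
            + (if v.val = p0 then 1 else 0) := by
        intro v
        rw [degree_comap v]
        congr 1
        have hiff : G.Adj v.val ℓ ↔ v.val = p0 :=
          ⟨fun h => huniq _ h.symm, fun h => h ▸ hadj.symm⟩
        simp only [hiff]
      by_cases hr : r = ℓ
      · subst hr
        obtain ⟨W', hW'⟩ := ih (G.comap (Subtype.val : {x : V // x ≠ r} → V)) hcard' hT' ⟨p0, hp0ne⟩
        refine ⟨Walk.cons hadj ((W'.map (subHom _)).concat hadj.symm), ?_⟩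
        intro v
        erw [Walk.support_cons, Walk.support_concat,
          List.count_cons, List.count_append]
        by_cases hv : v = r
        · subst hv
          erw [hMl W']
          simp [hdeg]
        · have h2 : ((W'.map (subHom fun x => x ≠ r)).support).count v
              = W'.support.count ⟨v, hv⟩ := hMc W' ⟨v, hv⟩
          have h4 : G.degree v = (G.comap (Subtype.val : {x : V // x ≠ r} → V)).degree ⟨v, hv⟩
              + (if v = p0 then 1 else 0) := hdegv ⟨v, hv⟩
          have h3 : W'.support.count ⟨v, hv⟩
              = (G.comap (Subtype.val : {x : V // x ≠ r} → V)).degree ⟨v, hv⟩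
              + (if v = p0 then 1 else 0) := by
            have h5 := hW' ⟨v, hv⟩
            simpa [Subtype.mk.injEq, count_subtype_beq] using h5
          have i0 : List.count v [r] = 0 := by
            rw [List.count_eq_zero]
            simp [hv]
          have ig : (if v = r then 1 else 0) = 0 := by simp [hv]
          have irv : (if r = v then 1 else 0) = 0 := by
            simp [show ¬ r = v from fun h => hv h.symm]
          simp only [beq_iff_eq]
          erw [h2, h3, h4, i0, ig, irv]
      · obtain ⟨W', hW'⟩ := ih (G.comap (Subtype.val : {x : V // x ≠ ℓ} → V)) hcard' hT' ⟨r, hr⟩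
        set M := W'.map (subHom (G := G) (· ≠ ℓ)) with hM
        have hMc' : ∀ v : {x : V // x ≠ ℓ}, M.support.count v.val = W'.support.count v :=
          fun v => hMc W' v
        have hMl' : M.support.count ℓ = 0 := hMl W'
        clear_value M
        have hVV' : ∀ x y : {x : V // x ≠ ℓ}, Fintype.card {x : V // x ≠ ℓ} ≤ 1 → x = y := by
          intro x y h
          exact Fintype.card_le_one_iff.mp h x y
        have hp0mem : p0 ∈ M.support := by
          rw [← List.count_pos_iff]
          have h2 : M.support.count p0 = W'.support.count ⟨p0, hp0ne⟩ := hMc' ⟨p0, hp0ne⟩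
          have h3 := hW' ⟨p0, hp0ne⟩
          by_cases hpr : p0 = r
          · have he : (⟨p0, hp0ne⟩ : {x : V // x ≠ ℓ}) = ⟨r, hr⟩ := by simp [hpr]
            simp only [he, eq_self_iff_true, if_true] at h3
            rw [he] at h2
            simp only [count_subtype_beq] at h2
            omega
          · have hcc : 2 ≤ Fintype.card {x : V // x ≠ ℓ} := by
              by_contra hle
              push_neg at hle
              have := hVV' ⟨p0, hp0ne⟩ ⟨r, hr⟩ (Nat.lt_succ_iff.mp hle)
              exact hpr (congrArg Subtype.val this)
            have hd := deg_pos hT'.isConnected hcc ⟨p0, hp0ne⟩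
            have hne : (⟨p0, hp0ne⟩ : {x : V // x ≠ ℓ}) ≠ ⟨r, hr⟩ := by simp [hpr]
            simp only [if_neg hne] at h3
            simp only [count_subtype_beq] at h2
            omega
        refine ⟨(M.takeUntil p0 hp0mem).append
          (Walk.cons hadj.symm (Walk.cons hadj (M.dropUntil p0 hp0mem))), ?_⟩
        intro v
        have hsupp : M.support
            = (M.takeUntil p0 hp0mem).support ++ (M.dropUntil p0 hp0mem).support.tail := by
          conv_lhs => rw [← M.take_spec hp0mem]
          exact Walk.support_append _ _
        have hdropc : (M.dropUntil p0 hp0mem).support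
            = p0 :: (M.dropUntil p0 hp0mem).support.tail := Walk.support_eq_cons _
        have e1 : M.support.count v = (M.takeUntil p0 hp0mem).support.count v
            + (M.dropUntil p0 hp0mem).support.tail.count v := by
          rw [hsupp, List.count_append]
        have e2 : (M.dropUntil p0 hp0mem).support.count v
            = (M.dropUntil p0 hp0mem).support.tail.count v + (if v = p0 then 1 else 0) := by
          conv_lhs => rw [hdropc]
          rw [List.count_cons]
          rcases eq_or_ne v p0 with h | h
          · simp [h]
          · have h' : ¬ p0 = v := fun hh => h hh.symm
            simp [beq_iff_eq, h, h']
        erw [Walk.support_append, Walk.support_cons, Walk.support_cons, List.tail_cons,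
          List.count_append, List.count_cons, e2]
        simp only [beq_iff_eq]
        by_cases hvℓ : v = ℓ
        · subst hvℓ
          have hMl2 : M.support.count v = 0 := hMl'
          have hvp : (if v = p0 then 1 else 0) = 0 := by
            simp [show ¬ v = p0 from fun h => hp0ne h.symm]
          have hvr : (if v = r then 1 else 0) = 0 := by simp [Ne.symm hr]
          rw [hvp, hvr, hdeg]
          simp only [eq_self_iff_true, if_true]
          omega
        · have h2 : M.support.count v = W'.support.count ⟨v, hvℓ⟩ := hMc' ⟨v, hvℓ⟩
          have h4 : G.degree v = (G.comap (Subtype.val : {x : V // x ≠ ℓ} → V)).degree ⟨v, hvℓ⟩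
              + (if v = p0 then 1 else 0) := hdegv ⟨v, hvℓ⟩
          have h3 : W'.support.count ⟨v, hvℓ⟩
              = (G.comap (Subtype.val : {x : V // x ≠ ℓ} → V)).degree ⟨v, hvℓ⟩
              + (if v = r then 1 else 0) := by
            have h5 := hW' ⟨v, hvℓ⟩
            simpa [Subtype.mk.injEq, count_subtype_beq] using h5
          rw [if_neg (show ¬ ℓ = v from fun h => hvℓ h.symm), h4]
          omega


lemma exists_good_walk {V : Type u} [Fintype V] [DecidableEq V] (G : SimpleGraph V)
    [DecidableRel G.Adj] (hT : G.IsTree) (hn : 2 ≤ Fintype.card V) :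
    ∃ (a b : V) (_ : G.Adj a b) (W : G.Walk a b), ∀ v : V, W.support.count v = G.degree v := by
  obtain ⟨ℓ, p0, hadj, hdeg⟩ := exists_leaf hT hn
  have huniq : ∀ w, G.Adj ℓ w → w = p0 := by
    intro w hw
    have hcn : (G.neighborFinset ℓ).card = 1 := by
      rw [card_neighborFinset_eq_degree]; exact hdeg
    obtain ⟨a, ha⟩ := Finset.card_eq_one.mp hcn
    have hp : p0 ∈ G.neighborFinset ℓ := (mem_neighborFinset _ _ _).mpr hadj
    have hwm : w ∈ G.neighborFinset ℓ := (mem_neighborFinset _ _ _).mpr hw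
    rw [ha] at hp hwm
    rw [Finset.mem_singleton] at hp hwm
    rw [hwm, hp]
  haveI hGdec : DecidableRel (G.comap (Subtype.val : {x : V // x ≠ ℓ} → V)).Adj :=
    fun x y => ‹DecidableRel G.Adj› x.val y.val
  have hT' := comap_isTree hT hadj huniq hn
  have hp0ne : p0 ≠ ℓ := hadj.ne'
  obtain ⟨W', hW'⟩ := euler_tour (Fintype.card {x : V // x ≠ ℓ})
    (G.comap (Subtype.val : {x : V // x ≠ ℓ} → V)) le_rfl hT' ⟨p0, hp0ne⟩
  have hMc : ∀ (v : {x : V // x ≠ ℓ}),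
      (W'.map (subHom _)).support.count v.val = W'.support.count v := by
    intro v
    rw [Walk.support_map]
    have : (v : V) = subHom (G := G) (· ≠ ℓ) v := rfl
    rw [this]
    exact List.count_map_of_injective _ _ (subHom_injective _) v
  have hMl : (W'.map (subHom _)).support.count ℓ = 0 := by
    rw [List.count_eq_zero, Walk.support_map]
    intro hm
    obtain ⟨u, -, he⟩ := List.mem_map.mp hm
    exact u.prop he
  have hdegv : ∀ (v : {x : V // x ≠ ℓ}),
      G.degree v.val = (G.comap (Subtype.val : {x : V // x ≠ ℓ} → V)).degree v
        + (if v.val = p0 then 1 else 0) := by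
    intro v
    rw [degree_comap v]
    congr 1
    have hiff : G.Adj v.val ℓ ↔ v.val = p0 :=
      ⟨fun h => huniq _ h.symm, fun h => h ▸ hadj.symm⟩
    simp only [hiff]
  refine ⟨ℓ, p0, hadj, Walk.cons hadj (W'.map (subHom _)), ?_⟩
  intro v
  erw [Walk.support_cons, List.count_cons]
  simp only [beq_iff_eq]
  by_cases hv : v = ℓ
  · subst hv
    erw [hMl, hdeg]
    simp
  · have h2 : ((W'.map (subHom fun x => x ≠ ℓ)).support).count v
        = W'.support.count ⟨v, hv⟩ := hMc ⟨v, hv⟩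
    have h4 : G.degree v = (G.comap (Subtype.val : {x : V // x ≠ ℓ} → V)).degree ⟨v, hv⟩
        + (if v = p0 then 1 else 0) := hdegv ⟨v, hv⟩
    have h3 : W'.support.count ⟨v, hv⟩
        = (G.comap (Subtype.val : {x : V // x ≠ ℓ} → V)).degree ⟨v, hv⟩
        + (if v = p0 then 1 else 0) := by
      have h5 := hW' ⟨v, hv⟩
      simpa [Subtype.mk.injEq, count_subtype_beq] using h5
    have hlv : (if ℓ = v then 1 else 0) = 0 := by
      simp [show ¬ ℓ = v from fun h => hv h.symm]
    erw [h2, h3, h4, hlv]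
    omega

/-- For a finite tree `T` with at least 2 vertices, the minimum `k` such that `T` contains a
`k`-Unbounded Hamiltonian Cycle equals the number of non-leaf vertices (vertices of degree at
least 2).  In particular there is a spanning walk with adjacent endpoints whose unbounded
vertices are exactly the non-leaf vertices, and in every spanning walk with adjacent endpoints
every non-leaf vertex occurs at least twice. -/
theorem tree_min_unbounded_hamiltonian_cycle_eq_card_nonleaves
    {V : Type*} [Fintype V] [DecidableEq V] (G : SimpleGraph V) [DecidableRel G.Adj]
    (hT : G.IsTree) (hn : 2 ≤ Fintype.card V) :
    IsLeast {k : ℕ | ∃ (a b : V) (_ : G.Adj a b) (W : G.Walk a b),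
        (∀ x : V, x ∈ W.support) ∧
        (Finset.univ.filter fun x : V => 1 < W.support.count x).card = k}
      (Finset.univ.filter fun v : V => 2 ≤ G.degree v).card ∧
    (∃ (a b : V) (_ : G.Adj a b) (W : G.Walk a b),
        (∀ x : V, x ∈ W.support) ∧
        ∀ x : V, 1 < W.support.count x ↔ 2 ≤ G.degree x) ∧
    (∀ (a b : V) (_ : G.Adj a b) (W : G.Walk a b), (∀ x : V, x ∈ W.support) →
        ∀ x : V, 2 ≤ G.degree x → 1 < W.support.count x) := by
  obtain ⟨a, b, hab, W, hW⟩ := exists_good_walk G hT hn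
  have hdegpos : ∀ v, 1 ≤ G.degree v := deg_pos hT.isConnected hn
  have hspan : ∀ x : V, x ∈ W.support := fun x =>
    List.count_pos_iff.mp (by rw [hW x]; exact hdegpos x)
  have hiff : ∀ x : V, 1 < W.support.count x ↔ 2 ≤ G.degree x := fun x => by
    rw [hW x]
    omega
  have hfilter : (Finset.univ.filter fun x : V => 1 < W.support.count x)
      = (Finset.univ.filter fun v : V => 2 ≤ G.degree v) := by
    apply Finset.filter_congr
    intro x _
    simp [hiff x]
  refine ⟨⟨⟨a, b, hab, W, hspan, by rw [hfilter]⟩, ?_⟩, ⟨a, b, hab, W, hspan, hiff⟩, ?_⟩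
  · rintro k ⟨a', b', hab', W', hspan', rfl⟩
    apply Finset.card_le_card
    intro x hx
    simp only [Finset.mem_filter, Finset.mem_univ, true_and] at hx ⊢
    exact lower_bound hT hab' W' hspan' hx
  · intro a' b' hab' W' hspan' x hx
    exact lower_bound hT hab' W' hspan' hx
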